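/- Let H and K be complex Hilbert spaces, U : H ⊗ K → H ⊗ K a unitary operator, μ ∈ K a fixed unit vector, and O a self-adjoint (or just linear) operator on H. Suppose ψ₁, ψ₂ ∈ H are such that U(ψ₁ ⊗ μ) = ψ₁' ⊗ μ₁' and U(ψ₂ ⊗ μ) = ψ₂' ⊗ μ₂', where ψ₁' and ψ₂' are eigenvectors of O for distinct eigenvalues and μ₁', μ₂' are nonzero. Then for all nonzero complex numbers α₁, α₂, the vector U((α₁ψ₁ + α₂ψ₂) ⊗ μ) is not of the form ψ'' ⊗ μ'' with ψ'' an eigenvector of O. -/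

import Mathlib

open scoped ComplexInnerProductSpace

/-- Theorem 2 of the paper ("unitary_ic"). The Hilbert tensor product `H ⊗ K` is modeled
abstractly as a Hilbert space `HK` together with a bilinear map `tmul` satisfying the
characteristic inner-product identity `⟪a ⊗ b, c ⊗ d⟫ = ⟪a, c⟫ ⟪b, d⟫`. -/
theorem stmt_0
    {H K HK : Type*}
    [NormedAddCommGroup H] [InnerProductSpace ℂ H] [CompleteSpace H]
    [NormedAddCommGroup K] [InnerProductSpace ℂ K] [CompleteSpace K]
    [NormedAddCommGroup HK] [InnerProductSpace ℂ HK] [CompleteSpace HK]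
    (tmul : H →ₗ[ℂ] K →ₗ[ℂ] HK)
    (htmul : ∀ (a c : H) (b d : K), ⟪tmul a b, tmul c d⟫ = ⟪a, c⟫ * ⟪b, d⟫)
    (U : HK ≃ₗᵢ[ℂ] HK)
    (O : H →ₗ[ℂ] H)
    (μ : K) (hμ : ‖μ‖ = 1)
    (ψ₁ ψ₂ ψ₁' ψ₂' : H) (μ₁' μ₂' : K) (lam₁ lam₂ : ℂ)
    (hψ₁' : ψ₁' ≠ 0) (hψ₂' : ψ₂' ≠ 0)
    (hO₁ : O ψ₁' = lam₁ • ψ₁') (hO₂ : O ψ₂' = lam₂ • ψ₂') (hlam : lam₁ ≠ lam₂)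
    (hμ₁' : μ₁' ≠ 0) (hμ₂' : μ₂' ≠ 0)
    (hU₁ : U (tmul ψ₁ μ) = tmul ψ₁' μ₁')
    (hU₂ : U (tmul ψ₂ μ) = tmul ψ₂' μ₂')
    (α₁ α₂ : ℂ) (hα₁ : α₁ ≠ 0) (hα₂ : α₂ ≠ 0) :
    ¬ ∃ (ψ'' : H) (μ'' : K) (lam : ℂ), ψ'' ≠ 0 ∧ O ψ'' = lam • ψ'' ∧
        U (tmul (α₁ • ψ₁ + α₂ • ψ₂) μ) = tmul ψ'' μ'' := by
  rintro ⟨ψ'', μ'', lam, hψ'', hOψ'', hUeq⟩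
  -- linear independence of eigenvectors for distinct eigenvalues
  have hind : ∀ a b : ℂ, a • ψ₁' + b • ψ₂' = 0 → a = 0 ∧ b = 0 := by
    intro a b hab
    have h2 : a • (lam₁ • ψ₁') + b • (lam₂ • ψ₂') = 0 := by
      have := congrArg O hab
      simpa [map_add, map_smul, hO₁, hO₂] using this
    have h3 : (b * (lam₁ - lam₂)) • ψ₂' = 0 := by
      have hc : (b * (lam₁ - lam₂)) • ψ₂'
          = lam₁ • (a • ψ₁' + b • ψ₂') - (a • (lam₁ • ψ₁') + b • (lam₂ • ψ₂')) := by
        module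
      rw [hab, h2] at hc; simpa using hc
    have hb : b = 0 := by
      rcases smul_eq_zero.mp h3 with h | h
      · rcases mul_eq_zero.mp h with h | h
        · exact h
        · exact absurd (sub_eq_zero.mp h) hlam
      · exact absurd h hψ₂'
    refine ⟨?_, hb⟩
    have : a • ψ₁' = 0 := by simpa [hb] using hab
    rcases smul_eq_zero.mp this with h | h
    · exact h
    · exact absurd h hψ₁'
  -- main tensor identity
  have hE : tmul ψ'' μ'' = α₁ • tmul ψ₁' μ₁' + α₂ • tmul ψ₂' μ₂' := by
    rw [← hU₁, ← hU₂, ← hUeq]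
    simp [map_add, map_smul]
  have key : ∀ (x : H) (y : K),
      ⟪x, ψ''⟫ * ⟪y, μ''⟫
        = α₁ * (⟪x, ψ₁'⟫ * ⟪y, μ₁'⟫) + α₂ * (⟪x, ψ₂'⟫ * ⟪y, μ₂'⟫) := by
    intro x y
    have := congrArg (fun z => ⟪tmul x y, z⟫) hE
    simpa [inner_add_right, inner_smul_right, htmul] using this
  -- test vectors
  set t₁ : ℂ := ⟪ψ₂', ψ₁'⟫ / (‖ψ₂'‖ : ℂ)^2 with ht₁
  set x₁ : H := ψ₁' - t₁ • ψ₂' with hx₁def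
  have hn₂ : ((‖ψ₂'‖ : ℂ))^2 ≠ 0 := by
    simp [hψ₂']
  have hx₁₂ : ⟪x₁, ψ₂'⟫ = 0 := by
    rw [hx₁def, inner_sub_left, inner_smul_left]
    rw [ht₁]
    rw [← inner_conj_symm ψ₁' ψ₂']
    rw [inner_self_eq_norm_sq_to_K (𝕜 := ℂ)]
    field_simp
    rw [map_div₀, map_pow, Complex.conj_ofReal]
    exact sub_eq_zero.mpr (div_mul_cancel₀ _ hn₂).symm
  have hx₁ne : x₁ ≠ 0 := by
    intro h
    have : (1 : ℂ) • ψ₁' + (-t₁) • ψ₂' = 0 := by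
      rw [hx₁def] at h
      simpa [sub_eq_add_neg, neg_smul] using h
    exact one_ne_zero (hind 1 (-t₁) this).1
  have hx₁₁ : ⟪x₁, ψ₁'⟫ ≠ 0 := by
    have : ⟪x₁, ψ₁'⟫ = ⟪x₁, x₁⟫ := by
      rw [hx₁def, inner_sub_right, inner_smul_right]
      rw [show ⟪ψ₁' - t₁ • ψ₂', ψ₂'⟫ = ⟪x₁, ψ₂'⟫ from rfl, hx₁₂]
      ring
    rw [this]
    exact fun h => hx₁ne (inner_self_eq_zero.mp h)
  set t₂ : ℂ := ⟪ψ₁', ψ₂'⟫ / (‖ψ₁'‖ : ℂ)^2 with ht₂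
  set x₂ : H := ψ₂' - t₂ • ψ₁' with hx₂def
  have hx₂₁ : ⟪x₂, ψ₁'⟫ = 0 := by
    rw [hx₂def, inner_sub_left, inner_smul_left]
    rw [ht₂]
    rw [← inner_conj_symm ψ₂' ψ₁']
    rw [inner_self_eq_norm_sq_to_K (𝕜 := ℂ)]
    have hn₁ : ((‖ψ₁'‖ : ℂ))^2 ≠ 0 := by simp [hψ₁']
    field_simp
    rw [map_div₀, map_pow, Complex.conj_ofReal]
    exact sub_eq_zero.mpr (div_mul_cancel₀ _ hn₁).symm
  have hx₂ne : x₂ ≠ 0 := by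
    intro h
    have : (-t₂) • ψ₁' + (1 : ℂ) • ψ₂' = 0 := by
      rw [hx₂def] at h
      have := h
      rw [sub_eq_zero] at this
      simp [neg_smul, this]
    exact one_ne_zero (hind (-t₂) 1 this).2
  have hx₂₂ : ⟪x₂, ψ₂'⟫ ≠ 0 := by
    have : ⟪x₂, ψ₂'⟫ = ⟪x₂, x₂⟫ := by
      rw [hx₂def, inner_sub_right, inner_smul_right]
      rw [show ⟪ψ₂' - t₂ • ψ₁', ψ₁'⟫ = ⟪x₂, ψ₁'⟫ from rfl, hx₂₁]
      ring
    rw [this]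
    exact fun h => hx₂ne (inner_self_eq_zero.mp h)
  -- μ₁' and μ₂' are multiples of μ''
  have hμeq₁ : ⟪x₁, ψ''⟫ • μ'' = (α₁ * ⟪x₁, ψ₁'⟫) • μ₁' := by
    refine ext_inner_left ℂ fun y => ?_
    rw [inner_smul_right, inner_smul_right]
    have := key x₁ y
    rw [hx₁₂] at this
    linear_combination this
  have hμeq₂ : ⟪x₂, ψ''⟫ • μ'' = (α₂ * ⟪x₂, ψ₂'⟫) • μ₂' := by
    refine ext_inner_left ℂ fun y => ?_
    rw [inner_smul_right, inner_smul_right]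
    have := key x₂ y
    rw [hx₂₁] at this
    linear_combination this
  have hc₁ : ⟪x₁, ψ''⟫ ≠ 0 := by
    intro h
    rw [h, zero_smul] at hμeq₁
    rcases smul_eq_zero.mp hμeq₁.symm with h' | h'
    · exact (mul_ne_zero hα₁ hx₁₁) h'
    · exact hμ₁' h'
  have hc₂ : ⟪x₂, ψ''⟫ ≠ 0 := by
    intro h
    rw [h, zero_smul] at hμeq₂
    rcases smul_eq_zero.mp hμeq₂.symm with h' | h'
    · exact (mul_ne_zero hα₂ hx₂₂) h'
    · exact hμ₂' h'
  have hμ''ne : μ'' ≠ 0 := by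
    intro h
    rw [h, smul_zero] at hμeq₁
    rcases smul_eq_zero.mp hμeq₁.symm with h' | h'
    · exact (mul_ne_zero hα₁ hx₁₁) h'
    · exact hμ₁' h'
  -- express μ₁', μ₂' via μ''
  set a : ℂ := α₁ * (⟪x₁, ψ''⟫ / (α₁ * ⟪x₁, ψ₁'⟫)) with ha
  set b : ℂ := α₂ * (⟪x₂, ψ''⟫ / (α₂ * ⟪x₂, ψ₂'⟫)) with hb
  have hd₁ : α₁ * ⟪x₁, ψ₁'⟫ ≠ 0 := mul_ne_zero hα₁ hx₁₁
  have hd₂ : α₂ * ⟪x₂, ψ₂'⟫ ≠ 0 := mul_ne_zero hα₂ hx₂₂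
  have hμ₁'eq : μ₁' = (⟪x₁, ψ''⟫ / (α₁ * ⟪x₁, ψ₁'⟫)) • μ'' := by
    have h := congrArg (fun v => (α₁ * ⟪x₁, ψ₁'⟫)⁻¹ • v) hμeq₁
    have hone : (⟪x₁, ψ₁'⟫)⁻¹ * α₁⁻¹ * (α₁ * ⟪x₁, ψ₁'⟫) = 1 := by
      field_simp
    simpa [smul_smul, hone, div_eq_inv_mul, mul_inv_rev] using h.symm
  have hμ₂'eq : μ₂' = (⟪x₂, ψ''⟫ / (α₂ * ⟪x₂, ψ₂'⟫)) • μ'' := by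
    have h := congrArg (fun v => (α₂ * ⟪x₂, ψ₂'⟫)⁻¹ • v) hμeq₂
    have hone : (⟪x₂, ψ₂'⟫)⁻¹ * α₂⁻¹ * (α₂ * ⟪x₂, ψ₂'⟫) = 1 := by
      field_simp
    simpa [smul_smul, hone, div_eq_inv_mul, mul_inv_rev] using h.symm
  have hane : a ≠ 0 := by
    rw [ha]; exact mul_ne_zero hα₁ (div_ne_zero hc₁ hd₁)
  have hbne : b ≠ 0 := by
    rw [hb]; exact mul_ne_zero hα₂ (div_ne_zero hc₂ hd₂)
  -- ψ'' = a • ψ₁' + b • ψ₂'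
  have hE' : tmul (ψ'' - (a • ψ₁' + b • ψ₂')) μ'' = 0 := by
    have : tmul ψ'' μ'' = tmul (a • ψ₁' + b • ψ₂') μ'' := by
      rw [hE, hμ₁'eq, hμ₂'eq]
      simp [map_add, map_smul, smul_smul, ha, hb]
    rw [map_sub, LinearMap.sub_apply, this, sub_self]
  have hψ''eq : ψ'' = a • ψ₁' + b • ψ₂' := by
    have h0 : ⟪ψ'' - (a • ψ₁' + b • ψ₂'), ψ'' - (a • ψ₁' + b • ψ₂')⟫
        * ⟪μ'', μ''⟫ = 0 := by
      rw [← htmul, hE', inner_zero_right]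
    rcases mul_eq_zero.mp h0 with h | h
    · exact sub_eq_zero.mp (inner_self_eq_zero.mp h)
    · exact absurd (inner_self_eq_zero.mp h) hμ''ne
  -- eigenvalue contradiction
  have hO' : a • (lam₁ • ψ₁') + b • (lam₂ • ψ₂') = lam • (a • ψ₁' + b • ψ₂') := by
    have := hOψ''
    rw [hψ''eq] at this
    simpa [map_add, map_smul, hO₁, hO₂] using this
  have hfin : (a * (lam₁ - lam)) • ψ₁' + (b * (lam₂ - lam)) • ψ₂' = 0 := by
    have hc : (a * (lam₁ - lam)) • ψ₁' + (b * (lam₂ - lam)) • ψ₂'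
        = (a • (lam₁ • ψ₁') + b • (lam₂ • ψ₂')) - lam • (a • ψ₁' + b • ψ₂') := by
      module
    rw [hO'] at hc; simpa using hc
  obtain ⟨h1, h2⟩ := hind _ _ hfin
  have e1 : lam₁ = lam := by
    rcases mul_eq_zero.mp h1 with h | h
    · exact absurd h hane
    · exact sub_eq_zero.mp h
  have e2 : lam₂ = lam := by
    rcases mul_eq_zero.mp h2 with h | h
    · exact absurd h hbne
    · exact sub_eq_zero.mp h
  exact hlam (e1.trans e2.symm)
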